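/- arXiv:1905.11059 — 4 statements merged into one kernel-verified Lean document; each statement's English description precedes it below -/
import Mathlib

section
/- If $p$ is a type over a model $M$ that is $M$-definable, and $a_1$ realizes $p$, then for any $a_2$ algebraic over $M \cup \{a_1\}$, the type $\mathrm{tp}(a_2/M)$ is also $M$-definable. -/
open FirstOrder FirstOrder.Language Set

universe u

namespace DefinableTypes

variable {L : FirstOrder.Language.{u, u}}

/-- The type of the tuple `a` over the elementary substructure `S` (inside the ambient
(monster) model) is definable over `S`: for every formula `φ(x, y)`, the set of parameter
tuples `c` from `S` such that `φ(a, c)` holds is definable in `S` with parameters from `S`. -/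
def DefinableTypeOver {U : Type u} [L.Structure U]
    (S : L.ElementarySubstructure U) {α : Type*} (a : α → U) : Prop :=
  ∀ (n : ℕ) (φ : L.Formula (α ⊕ (Fin n))),
    Set.Definable (Set.univ : Set S) L
      {c : Fin n → S | φ.Realize (Sum.elim a (fun i => ((c i : U))))}

/-- The algebraic closure of a set `A` in a structure `N`: the set of elements satisfying a
formula with parameters from `A` which has only finitely many realizations. -/
def aclSet (L : FirstOrder.Language.{u, u}) {N : Type u} [L.Structure N] (A : Set N) : Set N :=
  {x | ∃ (n : ℕ) (φ : L.Formula (Fin 1 ⊕ Fin n)) (c : Fin n → N),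
    (∀ i, c i ∈ A) ∧ φ.Realize (Sum.elim (fun _ => x) c) ∧
    {y : N | φ.Realize (Sum.elim (fun _ => y) c)}.Finite}

/-- Auxiliary: the solution set of the formula `θ(x, a₁, d)`. -/
def SolSet {U : Type u} [L.Structure U] (a₁ : U) {n : ℕ}
    (θ : L.Formula ((Fin 1 ⊕ Fin 1) ⊕ Fin n)) (d : Fin n → U) : Set U :=
  {y : U | θ.Realize (Sum.elim (Sum.elim (fun _ => y) (fun _ => a₁)) d)}

/-- Auxiliary: `k` is the cardinality of a finite solution set of some formula over `M ∪ {a₁}`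
containing `a₂`. -/
def PCard {U : Type u} [L.Structure U] (M : L.ElementarySubstructure U)
    (a₁ a₂ : U) (k : ℕ) : Prop :=
  ∃ (n : ℕ) (θ : L.Formula ((Fin 1 ⊕ Fin 1) ⊕ Fin n)) (d : Fin n → U),
    (∀ i, d i ∈ M) ∧ a₂ ∈ SolSet a₁ θ d ∧
    ∃ h : (SolSet a₁ θ d).Finite, h.toFinset.card = k

/-- If `tp(a₁/M)` is definable and `a₂ ∈ acl(M a₁)`, then `tp(a₂/M)` is definable.
(Here `M` is an elementary substructure of the monster model `U`.) -/
theorem definableTypeOver_of_mem_aclSet {U : Type u} [L.Structure U]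
    (M : L.ElementarySubstructure U) (a₁ a₂ : U)
    (h₁ : DefinableTypeOver M (fun _ : Fin 1 => a₁))
    (h₂ : a₂ ∈ aclSet L ((M : Set U) ∪ {a₁})) :
    DefinableTypeOver M (fun _ : Fin 1 => a₂) := by
  classical
  haveI : Nonempty U := ⟨a₁⟩
  obtain ⟨m₀⟩ : Nonempty M := inferInstance
  obtain ⟨n₀, φ₀, c₀, hc₀, hreal₀, hfin₀⟩ := h₂
  -- Step 1 : PCard is nonempty
  have hP0 : ∃ k, PCard M a₁ a₂ k := by
    set r : Fin 1 ⊕ Fin n₀ → (Fin 1 ⊕ Fin 1) ⊕ Fin n₀ :=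
      Sum.elim (fun _ => Sum.inl (Sum.inl 0))
        (fun i => if c₀ i ∈ M then Sum.inr i else Sum.inl (Sum.inr 0)) with hr
    set d : Fin n₀ → U := fun i => if c₀ i ∈ M then c₀ i else (m₀ : U) with hdd
    have hcomp : ∀ y : U,
        (Sum.elim (Sum.elim (fun _ => y) (fun _ => a₁)) d) ∘ r
          = Sum.elim (fun _ => y) c₀ := by
      intro y
      funext x
      rcases x with i | i
      · rfl
      · by_cases h : c₀ i ∈ M
        · simp [hr, hdd, h]
        · have hca : c₀ i = a₁ := (hc₀ i).resolve_left h
          simp only [Function.comp_apply, hr, hdd, Sum.elim_inr, if_neg h, Sum.elim_inl]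
          exact hca.symm
    have hsol : SolSet a₁ (φ₀.relabel r) d = {y : U | φ₀.Realize (Sum.elim (fun _ => y) c₀)} := by
      ext y
      simp only [SolSet, Set.mem_setOf_eq, Formula.realize_relabel, hcomp y]
    have hfin : (SolSet a₁ (φ₀.relabel r) d).Finite := by rw [hsol]; exact hfin₀
    refine ⟨hfin.toFinset.card, n₀, φ₀.relabel r, d, ?_, ?_, hfin, rfl⟩
    · intro i
      by_cases h : c₀ i ∈ M
      · simpa [hdd, h] using h
      · simpa [hdd, h] using m₀.2
    · rw [hsol]
      exact hreal₀
  obtain ⟨m, θ, d, hd, ha₂θ, hfinθ, hcard⟩ := Nat.find_spec hP0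
  -- Step 2 : the key claim
  have key : ∀ (n : ℕ) (ψ : L.Formula (Fin 1 ⊕ Fin n)) (c : Fin n → U), (∀ i, c i ∈ M) →
      (ψ.Realize (Sum.elim (fun _ => a₂) c) ↔
        ∀ y ∈ SolSet a₁ θ d, ψ.Realize (Sum.elim (fun _ => y) c)) := by
    intro n ψ c hc
    constructor
    · intro hψ
      set θ' : L.Formula ((Fin 1 ⊕ Fin 1) ⊕ Fin (m + n)) :=
        (θ.relabel (Sum.map id (Fin.castAdd n))) ⊓
          (ψ.relabel (Sum.elim (fun _ => Sum.inl (Sum.inl 0))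
            (fun j => Sum.inr (Fin.natAdd m j)))) with hθ'
      set e : Fin (m + n) → U := Fin.append d c with he
      have h1 : ∀ y : U,
          θ'.Realize (Sum.elim (Sum.elim (fun _ => y) (fun _ => a₁)) e) ↔
            (θ.Realize (Sum.elim (Sum.elim (fun _ => y) (fun _ => a₁)) d) ∧
              ψ.Realize (Sum.elim (fun _ => y) c)) := by
        intro y
        have e1 : (Sum.elim (Sum.elim (fun _ : Fin 1 => y) (fun _ : Fin 1 => a₁)) e) ∘
            (Sum.map (id : Fin 1 ⊕ Fin 1 → Fin 1 ⊕ Fin 1) (Fin.castAdd n))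
              = Sum.elim (Sum.elim (fun _ : Fin 1 => y) (fun _ : Fin 1 => a₁)) d := by
          funext x
          rcases x with x | i
          · rfl
          · simp [he, Fin.append_left]
        have e2 : (Sum.elim (Sum.elim (fun _ : Fin 1 => y) (fun _ : Fin 1 => a₁)) e) ∘
            (Sum.elim (fun _ : Fin 1 => Sum.inl (Sum.inl (0 : Fin 1)))
              (fun j => Sum.inr (Fin.natAdd m j)))
              = Sum.elim (fun _ : Fin 1 => y) c := by
          funext x
          rcases x with x | j
          · rfl
          · simp [he, Fin.append_right]
        rw [hθ', Formula.realize_inf, Formula.realize_relabel, Formula.realize_relabel, e1, e2]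
      have hsol' : SolSet a₁ θ' e =
          SolSet a₁ θ d ∩ {y : U | ψ.Realize (Sum.elim (fun _ => y) c)} := by
        ext y
        simpa [SolSet, Set.mem_setOf_eq] using h1 y
      have hsub : SolSet a₁ θ' e ⊆ SolSet a₁ θ d := by
        rw [hsol']; exact Set.inter_subset_left
      have hfin' : (SolSet a₁ θ' e).Finite := hfinθ.subset hsub
      have heM : ∀ i, e i ∈ M := by
        intro i
        refine Fin.addCases (fun i' => ?_) (fun j => ?_) i
        · simpa [he, Fin.append_left] using hd i'
        · simpa [he, Fin.append_right] using hc j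
      have hP' : PCard M a₁ a₂ hfin'.toFinset.card := by
        refine ⟨m + n, θ', e, heM, ?_, hfin', rfl⟩
        exact (h1 a₂).2 ⟨ha₂θ, hψ⟩
      have hle : Nat.find hP0 ≤ hfin'.toFinset.card := Nat.find_le hP'
      have hsubF : hfin'.toFinset ⊆ hfinθ.toFinset := by
        intro y hy
        rw [Set.Finite.mem_toFinset] at *
        exact hsub hy
      have hFeq : hfin'.toFinset = hfinθ.toFinset := by
        refine Finset.eq_of_subset_of_card_le hsubF ?_
        rw [hcard]; exact hle
      intro y hy
      have hy' : y ∈ SolSet a₁ θ' e := by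
        rw [← Set.Finite.mem_toFinset hfin', hFeq, Set.Finite.mem_toFinset]
        exact hy
      exact ((h1 y).1 hy').2
    · intro h
      exact h a₂ ha₂θ
  -- Step 3 : conclude definability
  intro n ψ
  set d' : Fin m → M := fun i => ⟨d i, hd i⟩ with hd'
  set f : (((Fin 1 ⊕ Fin 1) ⊕ Fin m) ⊕ (Fin 1 ⊕ Fin n)) →
      (Fin 1 ⊕ Fin (m + n)) ⊕ Fin 1 :=
    Sum.elim
      (Sum.elim (Sum.elim (fun _ => Sum.inr 0) (fun _ => Sum.inl (Sum.inl 0)))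
        (fun i => Sum.inl (Sum.inr (Fin.castAdd n i))))
      (Sum.elim (fun _ => Sum.inr 0) (fun j => Sum.inl (Sum.inr (Fin.natAdd m j)))) with hf
  set ξ : L.Formula (((Fin 1 ⊕ Fin 1) ⊕ Fin m) ⊕ (Fin 1 ⊕ Fin n)) :=
    (θ.relabel Sum.inl).imp (ψ.relabel Sum.inr) with hξ
  set χ : L.Formula (Fin 1 ⊕ Fin (m + n)) := (ξ.relabel f).iAlls (Fin 1) with hχdef
  have hχ : ∀ c : Fin n → M,
      (χ.Realize (Sum.elim (fun _ : Fin 1 => a₁) (fun i => ((Fin.append d' c i : M) : U))) ↔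
        ψ.Realize (Sum.elim (fun _ => a₂) (fun j => ((c j : M) : U)))) := by
    intro c
    set v : Fin 1 ⊕ Fin (m + n) → U :=
      Sum.elim (fun _ : Fin 1 => a₁) (fun i => ((Fin.append d' c i : M) : U)) with hv
    have hx : ∀ y : U,
        ξ.Realize (fun a => Sum.elim v (fun _ : Fin 1 => y) (f a)) ↔
          (y ∈ SolSet a₁ θ d → ψ.Realize (Sum.elim (fun _ => y) (fun j => ((c j : M) : U)))) := by
      intro y
      have e1 : (fun a => Sum.elim v (fun _ : Fin 1 => y) (f a)) ∘ Sum.inl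
          = Sum.elim (Sum.elim (fun _ : Fin 1 => y) (fun _ : Fin 1 => a₁)) d := by
        funext x
        rcases x with (x | x) | i
        · rfl
        · rfl
        · simp [hf, hv, Fin.append_left, hd']
      have e2 : (fun a => Sum.elim v (fun _ : Fin 1 => y) (f a)) ∘ Sum.inr
          = Sum.elim (fun _ : Fin 1 => y) (fun j => ((c j : M) : U)) := by
        funext x
        rcases x with x | j
        · rfl
        · simp [hf, hv, Fin.append_right]
      rw [hξ, Formula.realize_imp, Formula.realize_relabel, Formula.realize_relabel, e1, e2]
      rfl
    rw [hχdef, Formula.realize_iAlls, key n ψ (fun j => ((c j : M) : U)) (fun j => (c j).2)]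
    simp only [Formula.realize_relabel]
    constructor
    · intro h y hy
      exact (hx y).1 (h (fun _ => y)) hy
    · intro h i
      have : i = fun _ => i 0 := funext fun x => congrArg i (Subsingleton.elim x 0)
      rw [this]
      exact (hx (i 0)).2 (h (i 0))
  obtain ⟨ρ, hρ⟩ := (definable_iff_exists_formula_sum).1 (h₁ (m + n) χ)
  rw [definable_iff_exists_formula_sum]
  set g : ↥(Set.univ : Set M) ⊕ Fin (m + n) → ↥(Set.univ : Set M) ⊕ Fin n :=
    Sum.elim (fun a => Sum.inl a)
      (fun i => Sum.elim (fun i' => Sum.inl ⟨d' i', Set.mem_univ _⟩)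
        (fun j => Sum.inr j) (finSumFinEquiv.symm i)) with hg
  refine ⟨ρ.relabel g, ?_⟩
  ext c
  have hcomp : (Sum.elim (fun a : ↥(Set.univ : Set M) => (a : M)) c) ∘ g
      = Sum.elim (fun a : ↥(Set.univ : Set M) => (a : M)) (Fin.append d' c) := by
    funext x
    rcases x with a | i
    · rfl
    · refine Fin.addCases (fun i' => ?_) (fun j => ?_) i
      · simp [hg, Fin.append_left]
      · simp [hg, Fin.append_right]
  have hmemT : Fin.append d' c ∈
      {e : Fin (m + n) → M |
        χ.Realize (Sum.elim (fun _ : Fin 1 => a₁) (fun i => ((e i : M) : U)))} ↔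
      ψ.Realize (Sum.elim (fun _ => a₂) (fun j => ((c j : M) : U))) := by
    simpa using hχ c
  constructor
  · intro hc
    simp only [Set.mem_setOf_eq, Formula.realize_relabel, hcomp]
    have := hmemT.2 hc
    rw [hρ] at this
    exact this
  · intro hc
    simp only [Set.mem_setOf_eq, Formula.realize_relabel, hcomp] at hc
    refine hmemT.1 ?_
    rw [hρ]
    exact hc

end DefinableTypes
end

section
/- Let $(K \subseteq L, v)$ be a valued field extension such that every $y \in L$ is of the form $y = x + a$ with $a \in K$ and $|v(x)| > \Gamma_K$. Then the convex hull of $\Gamma_K$ in $\Gamma_L$ equals $\Gamma_K$, and the residue field of $L$ with respect to the coarsened valuation $w$ (composition of $v$ with the quotient $\Gamma_L \to \Gamma_L/\Gamma_K$) is isomorphic to $K$ via the map sending $y$ with $w(y) \ge 0$ to the unique $a \in K$ with $v(y-a) > \Gamma_K$. -/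
open Set

namespace Coarsening

variable {K L Γ : Type*} [Field K] [Field L] [Algebra K L]
  [LinearOrderedCommGroupWithZero Γ]

/-- `v x` lies outside the convex hull of the value group `Γ_K` of `K`
(`|v(x)| > Γ_K` in additive notation). -/
def OutsideHull (K : Type*) [Field K] [Algebra K L] (v : Valuation L Γ) (x : L) : Prop :=
  (∀ b : K, b ≠ 0 → v x < v (algebraMap K L b)) ∨
    (∀ b : K, b ≠ 0 → v (algebraMap K L b) < v x)

/-- `y` lies in the valuation ring of the coarsening `w` of `v` by the convex hull of `Γ_K`
(in additive notation, `w(y) ≥ 0`): `v y` is bounded by the value of some nonzero element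
of `K`. -/
def InCoarseInt (K : Type*) [Field K] [Algebra K L] (v : Valuation L Γ) (y : L) : Prop :=
  ∃ a : K, a ≠ 0 ∧ v y ≤ v (algebraMap K L a)

/-- `x` is infinitesimal with respect to `Γ_K` (`v(x) > Γ_K` additively): `v x` is smaller
than the value of every nonzero element of `K`. -/
def SmallerThanGammaK (K : Type*) [Field K] [Algebra K L] (v : Valuation L Γ) (x : L) : Prop :=
  ∀ b : K, b ≠ 0 → v x < v (algebraMap K L b)

section Aux
variable (v : Valuation L Γ)

lemma vmapK_ne_zero {b : K} (hb : b ≠ 0) : v (algebraMap K L b) ≠ 0 := by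
  simp [Valuation.ne_zero_iff, hb]

lemma small_zero : SmallerThanGammaK K v 0 := fun b hb => by
  simpa using zero_lt_iff.mpr (vmapK_ne_zero v hb)

lemma small_add {x y : L} (hx : SmallerThanGammaK K v x) (hy : SmallerThanGammaK K v y) :
    SmallerThanGammaK K v (x + y) := fun b hb =>
  lt_of_le_of_lt (v.map_add x y) (max_lt (hx b hb) (hy b hb))

lemma residue_unique {y : L} {a a' : K} (h : SmallerThanGammaK K v (y - algebraMap K L a))
    (h' : SmallerThanGammaK K v (y - algebraMap K L a')) : a = a' := by
  by_contra hne
  have hd : a - a' ≠ 0 := sub_ne_zero.mpr hne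
  have heq : algebraMap K L (a - a') = (y - algebraMap K L a') - (y - algebraMap K L a) := by
    rw [map_sub]; ring
  have h1 := (v.map_sub (y - algebraMap K L a') (y - algebraMap K L a)).trans_lt
    (max_lt (h' _ hd) (h _ hd))
  rw [← heq] at h1
  exact lt_irrefl _ h1

lemma exists_residue
    (hdec : ∀ y : L, ∃ (a : K) (x : L), y = x + algebraMap K L a ∧ OutsideHull K v x)
    {y : L} (hy : InCoarseInt K v y) :
    ∃ a : K, SmallerThanGammaK K v (y - algebraMap K L a) := by
  obtain ⟨a, x, rfl, hx⟩ := hdec y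
  refine ⟨a, ?_⟩
  simp only [add_sub_cancel_right]
  rcases hx with hsmall | hbig
  · exact hsmall
  · exfalso
    obtain ⟨a₀, ha₀, hle⟩ := hy
    have hvy : v (x + algebraMap K L a) = v x := by
      rcases eq_or_ne a 0 with rfl | ha
      · simp
      · exact v.map_add_eq_of_lt_left (hbig a ha)
    have := lt_of_lt_of_le (hbig a₀ ha₀) (hvy ▸ hle)
    exact lt_irrefl _ this

end Aux

/-- Suppose every `y ∈ L` is of the form `y = x + a` with `a ∈ K` and `|v(x)| > Γ_K`.  Then:
(1) the convex hull of `Γ_K` in `Γ_L` equals `Γ_K`; and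
(2) the residue field of the coarsened valuation `w` (the composition of `v` with the quotient
`Γ_L → Γ_L/Γ_K`) is isomorphic to `K`, via the map `r` sending each `y` with `w(y) ≥ 0` to the
unique `a ∈ K` with `v(y - a) > Γ_K`; `r` fixes `K`, and respects addition and multiplication
on the valuation ring of `w`. -/
theorem convexHull_eq_and_residue_iso (v : Valuation L Γ)
    (hdec : ∀ y : L, ∃ (a : K) (x : L), y = x + algebraMap K L a ∧ OutsideHull K v x) :
    -- (1) the convex hull of `Γ_K` in `Γ_L` is `Γ_K`:
    (∀ y : L, y ≠ 0 →
      (∃ b c : K, b ≠ 0 ∧ c ≠ 0 ∧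
        v (algebraMap K L b) ≤ v y ∧ v y ≤ v (algebraMap K L c)) →
      ∃ a : K, a ≠ 0 ∧ v y = v (algebraMap K L a)) ∧
    -- (2) the residue field of the coarsening is isomorphic to `K`:
    ∃ r : L → K,
      (∀ a : K, r (algebraMap K L a) = a) ∧
      (∀ y : L, InCoarseInt K v y →
        SmallerThanGammaK K v (y - algebraMap K L (r y))) ∧
      -- uniqueness of the residue representative:
      (∀ (y : L) (a : K), InCoarseInt K v y →
        SmallerThanGammaK K v (y - algebraMap K L a) → a = r y) ∧
      -- `r` is a ring homomorphism on the valuation ring of `w`: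
      (∀ y z : L, InCoarseInt K v y → InCoarseInt K v z →
        r (y + z) = r y + r z ∧ r (y * z) = r y * r z) := by
  classical
  constructor
  · rintro y hy ⟨b, c, hb, hc, hby, hyc⟩
    obtain ⟨a, x, rfl, hx⟩ := hdec y
    rcases hx with hsmall | hbig
    · rcases eq_or_ne a 0 with rfl | ha
      · exfalso
        simp only [map_zero, add_zero] at hby hyc ⊢
        exact absurd hby (not_le.mpr (hsmall b hb))
      · refine ⟨a, ha, ?_⟩
        rcases eq_or_ne x 0 with rfl | hx0
        · simp
        · exact v.map_add_eq_of_lt_right (hsmall a ha)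
    · exfalso
      have hvy : v (x + algebraMap K L a) = v x := by
        rcases eq_or_ne a 0 with rfl | ha
        · simp
        · exact v.map_add_eq_of_lt_left (hbig a ha)
      exact lt_irrefl _ (lt_of_lt_of_le (hbig c hc) (hvy ▸ hyc))
  · set r : L → K := fun y =>
      if h : ∃ a : K, SmallerThanGammaK K v (y - algebraMap K L a) then h.choose else 0
      with hr
    have hres : ∀ y : L, (∃ a : K, SmallerThanGammaK K v (y - algebraMap K L a)) →
        SmallerThanGammaK K v (y - algebraMap K L (r y)) := by
      intro y h
      rw [hr]; simp only [dif_pos h]; exact h.choose_spec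
    have huniq : ∀ (y : L) (a : K), SmallerThanGammaK K v (y - algebraMap K L a) → a = r y := by
      intro y a ha
      exact residue_unique v ha (hres y ⟨a, ha⟩)
    have hfix : ∀ a : K, r (algebraMap K L a) = a := by
      intro a
      refine (huniq (algebraMap K L a) a ?_).symm
      simpa using small_zero v
    have hK : ∀ y : L, InCoarseInt K v y → InCoarseInt K v (algebraMap K L (r y)) ∨ r y = 0 := by
      intro y hy
      rcases eq_or_ne (r y) 0 with h0 | h0
      · exact Or.inr h0
      · exact Or.inl ⟨r y, h0, le_rfl⟩
    refine ⟨r, hfix, fun y hy => hres y (exists_residue v hdec hy), fun y a _ ha => huniq y a ha,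
      ?_⟩
    intro y z hy hz
    have hry := hres y (exists_residue v hdec hy)
    have hrz := hres z (exists_residue v hdec hz)
    constructor
    · refine (huniq (y + z) (r y + r z) ?_).symm
      have : y + z - algebraMap K L (r y + r z)
          = (y - algebraMap K L (r y)) + (z - algebraMap K L (r z)) := by
        rw [map_add]; ring
      rw [this]
      exact small_add v hry hrz
    · refine (huniq (y * z) (r y * r z) ?_).symm
      have hdecomp : y * z - algebraMap K L (r y * r z)
          = y * (z - algebraMap K L (r z)) + algebraMap K L (r z) * (y - algebraMap K L (r y)) := by
        rw [map_mul]; ring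
      rw [hdecomp]
      -- small * bounded is small
      have key : ∀ (u t : L), InCoarseInt K v u → SmallerThanGammaK K v t →
          SmallerThanGammaK K v (u * t) := by
        intro u t hu ht b hb
        obtain ⟨c, hc, hcle⟩ := hu
        have hvc : v (algebraMap K L c) ≠ 0 := vmapK_ne_zero v hc
        have hcb : c⁻¹ * b ≠ 0 := mul_ne_zero (inv_ne_zero hc) hb
        have h1 : v t < v (algebraMap K L (c⁻¹ * b)) := ht _ hcb
        have h2 : v (u * t) ≤ v (algebraMap K L c) * v t := by
          rw [v.map_mul]; exact mul_le_mul_left hcle _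
        calc v (u * t) ≤ v (algebraMap K L c) * v t := h2
          _ < v (algebraMap K L c) * v (algebraMap K L (c⁻¹ * b)) := by
              exact mul_lt_mul_of_pos_left h1 (zero_lt_iff.mpr hvc)
          _ = v (algebraMap K L b) := by
              rw [← v.map_mul, ← map_mul, ← mul_assoc, mul_inv_cancel₀ hc, one_mul]
      have h1 : SmallerThanGammaK K v (y * (z - algebraMap K L (r z))) := key y _ hy hrz
      have h2 : SmallerThanGammaK K v (algebraMap K L (r y) * (y - algebraMap K L (r y))) := by
        rcases eq_or_ne (r y) 0 with h0 | h0
        · rw [h0]; simpa using small_zero v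
        · exact key _ _ ⟨r y, h0, le_rfl⟩ hry
      -- but decomposition uses r z * (y - r y); adjust
      exact small_add v h1 (by
        rcases eq_or_ne (r z) 0 with h0 | h0
        · rw [h0]; simpa using small_zero v
        · exact key _ _ ⟨r z, h0, le_rfl⟩ hry)
  
end Coarsening
end

section
/- Let $T$ be a complete theory such that (i) the class of stably embedded elementary pairs of models of $T$ is axiomatizable in the language of pairs $\mathcal{L}_P$, and (ii) for every model $M$ and every global $M$-definable type $p$, there is a stably embedded pair $(N, M)$ with $p$ realized in $N$. Then $T$ has uniform definability of types: every partitioned formula $\varphi(x;y)$ admits a single formula $\psi(y,z)$ such that for every model $M$ and every definable type $p$ over $M$, some instance $\psi(y,c)$, $c \in M$, is the $\varphi$-definition of $p$. -/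
open FirstOrder FirstOrder.Language Set

universe u

namespace UDCriterion

/-- The language with a single unary predicate `P`. -/
def pLang : FirstOrder.Language.{u, u} where
  Functions := fun _ => PEmpty
  Relations := fun n => match n with
    | 1 => PUnit
    | _ => PEmpty

variable (L : FirstOrder.Language.{u, u})

/-- The language of pairs `L_P`: `L` together with a new unary predicate `P`. -/
abbrev LP : FirstOrder.Language.{u, u} := L.sum pLang

/-- The interpretation of the predicate `P` in an `L_P`-structure. -/
def predSet (A : Type u) [(LP L).Structure A] : Set A :=
  {x | Structure.RelMap (L := LP L) (M := A) (n := 1) (Sum.inr PUnit.unit) ![x]}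

/-- The type of the tuple `a` over the elementary substructure `S` is definable over `S`. -/
def DefinableTypeOver {L : FirstOrder.Language.{u, u}} {N : Type u} [L.Structure N]
    (S : L.ElementarySubstructure N) {α : Type*} (a : α → N) : Prop :=
  ∀ (n : ℕ) (φ : L.Formula (α ⊕ (Fin n))),
    Set.Definable (Set.univ : Set S) L
      {c : Fin n → S | φ.Realize (Sum.elim a (fun i => ((c i : N))))}

/-- An `L_P`-structure `A` is a stably embedded pair of models of `T` if, with respect to the
`L`-reduct of `A`, `A ⊨ T` and the interpretation of `P` is (the underlying set of) an
elementary `L`-substructure `M` of `A` such that the type over `M` of every finite tuple from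
`A` is `M`-definable. -/
def IsSEPairModel (T : L.Theory) (A : Type u) [(LP L).Structure A] : Prop :=
  letI : L.Structure A := (LHom.sumInl : L →ᴸ LP L).reduct A
  (A ⊨ T) ∧ ∃ S : L.ElementarySubstructure A, (S : Set A) = predSet L A ∧
    ∀ (n : ℕ) (a : Fin n → A), DefinableTypeOver S a

/-- The type `tp(a/M)` (for `a` a tuple in an elementary extension `N` of `M`) is
definable over `M`. -/
def DefTypeVia {L : FirstOrder.Language.{u, u}} {M N : Type u} [L.Structure M] [L.Structure N]
    (h : M ↪ₑ[L] N) {α : Type*} (a : α → N) : Prop :=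
  ∀ (n : ℕ) (φ : L.Formula (α ⊕ Fin n)),
    Set.Definable (Set.univ : Set M) L {c : Fin n → M | φ.Realize (Sum.elim a (h ∘ c))}


section AuxA

variable {L : FirstOrder.Language.{u, u}}

theorem definable_univ_iff_params {M : Type u} [L.Structure M] {α : Type*}
    {s : Set (α → M)} :
    Set.Definable (Set.univ : Set M) L s ↔
      ∃ (k : ℕ) (ψ : L.Formula (α ⊕ Fin k)) (c : Fin k → M),
        ∀ v : α → M, v ∈ s ↔ ψ.Realize (Sum.elim v c) := by
  classical
  constructor
  · intro hdef
    rw [Set.definable_iff_finitely_definable] at hdef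
    obtain ⟨A0, -, hdef⟩ := hdef
    rw [Set.definable_iff_exists_formula_sum] at hdef
    obtain ⟨φ, hφ⟩ := hdef
    haveI : Fintype ((A0 : Set M) : Type u) := FinsetCoe.fintype A0
    let e : ((A0 : Set M) : Type u) ≃ Fin (Fintype.card ((A0 : Set M) : Type u)) :=
      Fintype.equivFin _
    refine ⟨_, φ.relabel (Sum.elim (fun a => Sum.inr (e a)) Sum.inl),
      fun i => ((e.symm i : M)), fun v => ?_⟩
    have hcomp : (Sum.elim v (fun i => ((e.symm i : M)))) ∘
        (Sum.elim (fun a => Sum.inr (e a)) Sum.inl) = Sum.elim (↑) v := by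
      funext x
      rcases x with a | x <;> simp
    rw [hφ, mem_setOf_eq, Formula.realize_relabel, hcomp]
  · rintro ⟨k, ψ, c, hc⟩
    rw [Set.definable_iff_exists_formula_sum]
    refine ⟨ψ.relabel (Sum.elim (fun a => Sum.inr a)
      (fun i => Sum.inl ⟨c i, mem_univ _⟩)), ?_⟩
    ext v
    have hcomp : (Sum.elim (Subtype.val : ((univ : Set M) : Type u) → M) v) ∘
        (Sum.elim (fun a => (Sum.inr a : ((univ : Set M) : Type u) ⊕ α))
          (fun i => Sum.inl ⟨c i, mem_univ _⟩))
        = Sum.elim v c := by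
      funext x
      rcases x with a | x <;> simp
    rw [mem_setOf_eq, Formula.realize_relabel, hcomp, hc v]


theorem combine_two {m k₁ k₂ : ℕ} (ψ₁ : L.Formula (Fin m ⊕ Fin k₁))
    (ψ₂ : L.Formula (Fin m ⊕ Fin k₂)) :
    ∃ (K : ℕ) (Ψ : L.Formula (Fin m ⊕ Fin K)),
      ∀ (M : Type u) [L.Structure M] (x y : M), x ≠ y →
        ∀ Q : (Fin m → M) → Prop,
          ((∃ c₁, ∀ b, Q b ↔ ψ₁.Realize (Sum.elim b c₁)) ∨
           (∃ c₂, ∀ b, Q b ↔ ψ₂.Realize (Sum.elim b c₂))) →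
          ∃ C : Fin K → M, ∀ b, Q b ↔ Ψ.Realize (Sum.elim b C) := by
  classical
  -- big parameter type
  let P : Type := (Fin k₁ ⊕ Fin k₂) ⊕ Fin 2
  let ε : P ≃ Fin (k₁ + k₂ + 2) :=
    (Equiv.sumCongr finSumFinEquiv (Equiv.refl (Fin 2))).trans finSumFinEquiv
  let eqf : L.Formula (Fin m ⊕ P) :=
    Term.equal (Term.var (Sum.inr (Sum.inr 0))) (Term.var (Sum.inr (Sum.inr 1)))
  let ψ₁' : L.Formula (Fin m ⊕ P) :=
    ψ₁.relabel (Sum.map id (fun i => Sum.inl (Sum.inl i)))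
  let ψ₂' : L.Formula (Fin m ⊕ P) :=
    ψ₂.relabel (Sum.map id (fun i => Sum.inl (Sum.inr i)))
  let Ψ₀ : L.Formula (Fin m ⊕ P) := (eqf ⊓ ψ₁') ⊔ (eqf.not ⊓ ψ₂')
  refine ⟨k₁ + k₂ + 2, Ψ₀.relabel (Sum.map id ε), fun M _ x y hxy Q hQ => ?_⟩
  have key : ∀ (D : P → M) (b : Fin m → M),
      (Ψ₀.relabel (Sum.map id ε)).Realize (Sum.elim b ((D ∘ ε.symm))) ↔
        ((D (Sum.inr 0) = D (Sum.inr 1) ∧ ψ₁.Realize (Sum.elim b (fun i => D (Sum.inl (Sum.inl i))))) ∨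
         (¬ D (Sum.inr 0) = D (Sum.inr 1) ∧ ψ₂.Realize (Sum.elim b (fun i => D (Sum.inl (Sum.inr i)))))) := by
    intro D b
    have hcomp : (Sum.elim b (D ∘ ε.symm)) ∘ (Sum.map id ε) = Sum.elim b D := by
      funext z
      rcases z with z | z <;> simp
    rw [Formula.realize_relabel, hcomp]
    have h1 : (Sum.elim b D) ∘ (Sum.map id (fun i => Sum.inl (Sum.inl i)) :
        Fin m ⊕ Fin k₁ → Fin m ⊕ P) = Sum.elim b (fun i => D (Sum.inl (Sum.inl i))) := by
      funext z; rcases z with z | z <;> simp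
    have h2 : (Sum.elim b D) ∘ (Sum.map id (fun i => Sum.inl (Sum.inr i)) :
        Fin m ⊕ Fin k₂ → Fin m ⊕ P) = Sum.elim b (fun i => D (Sum.inl (Sum.inr i))) := by
      funext z; rcases z with z | z <;> simp
    simp only [Ψ₀, eqf, ψ₁', ψ₂', Formula.realize_sup, Formula.realize_inf,
      Formula.realize_not, Formula.realize_equal, Term.realize_var, Sum.elim_inr,
      Formula.realize_relabel, h1, h2]
  rcases hQ with ⟨c₁, hc⟩ | ⟨c₂, hc⟩
  · set D : P → M := Sum.elim (Sum.elim c₁ (fun _ => x)) (fun _ => x) with hD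
    refine ⟨D ∘ ε.symm, fun b => ?_⟩
    rw [key D b]
    simp only [hD, Sum.elim_inr, Sum.elim_inl, not_true, false_and, or_false]
    rw [hc b]
    simp
  · set D : P → M := Sum.elim (Sum.elim (fun _ => x) c₂) (fun i => if i = 0 then x else y) with hD
    refine ⟨D ∘ ε.symm, fun b => ?_⟩
    rw [key D b]
    have hne : ¬ D (Sum.inr 0) = D (Sum.inr 1) := by simpa [hD] using hxy
    simp only [hne, false_and, or_false, false_or, true_and, hD, Sum.elim_inl]
    rw [hc b]
    simp [hne, hxy]

theorem combine_list {m : ℕ} (l : List ((k : ℕ) × L.Formula (Fin m ⊕ Fin k))) :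
    ∃ (K : ℕ) (Ψ : L.Formula (Fin m ⊕ Fin K)),
      ∀ (M : Type u) [L.Structure M] (x y : M), x ≠ y →
        ∀ Q : (Fin m → M) → Prop,
          (∃ j ∈ l, ∃ c : Fin j.1 → M, ∀ b, Q b ↔ j.2.Realize (Sum.elim b c)) →
          ∃ C : Fin K → M, ∀ b, Q b ↔ Ψ.Realize (Sum.elim b C) := by
  induction l with
  | nil =>
    exact ⟨0, ⊥, fun M _ x y hxy Q hQ => by simp at hQ⟩
  | cons j t ih =>
    obtain ⟨K', Ψ', hΨ'⟩ := ih
    obtain ⟨K, Ψ, hΨ⟩ := combine_two j.2 Ψ'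
    refine ⟨K, Ψ, fun M _ x y hxy Q hQ => ?_⟩
    obtain ⟨j', hj', c, hc⟩ := hQ
    rcases List.mem_cons.1 hj' with rfl | hmem
    · exact hΨ M x y hxy Q (Or.inl ⟨c, hc⟩)
    · exact hΨ M x y hxy Q (Or.inr (hΨ' M x y hxy Q ⟨j', hmem, c, hc⟩))


end AuxA

/-! ### Auxiliary machinery -/

section Aux

variable {L : FirstOrder.Language.{u, u}}

/-- A `pLang`-structure on any type, interpreting `P` as a given set. -/
def pStructureOfSet {A : Type u} (s : Set A) : pLang.{u}.Structure A where
  funMap {n} f _ := PEmpty.elim f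
  RelMap {n} R x :=
    match n, R, x with
    | 0, R, _ => PEmpty.elim R
    | 1, _, x => x 0 ∈ s
    | (_ + 2), R, _ => PEmpty.elim R

theorem mem_predSet_pStructureOfSet {A : Type u} [L.Structure A] (s : Set A) (x : A) :
    letI : pLang.{u}.Structure A := pStructureOfSet s
    x ∈ predSet L A ↔ x ∈ s := by
  letI : pLang.{u}.Structure A := pStructureOfSet s
  show Structure.RelMap (L := LP L) (M := A) (n := 1) (Sum.inr PUnit.unit) ![x] ↔ x ∈ s
  show (![x] 0 ∈ s) ↔ x ∈ s
  simp

/-- The range of an elementary embedding is an elementary substructure. -/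
theorem isElementary_range {M N : Type u} [L.Structure M] [L.Structure N] (f : M ↪ₑ[L] N) :
    (f.toEmbedding.toHom.range).IsElementary := by
  intro n φ x
  let e := f.toEmbedding.equivRange
  have hx : (Subtype.val ∘ x : Fin n → N) = f ∘ (fun i => e.symm (x i)) := by
    funext i
    have h0 : e (e.symm (x i)) = x i := e.toEquiv.apply_symm_apply (x i)
    calc (x i : N) = ((e (e.symm (x i)) : N)) := by rw [h0]
      _ = f (e.symm (x i)) := f.toEmbedding.equivRange_apply _
  show φ.Realize (Subtype.val ∘ x) ↔ _
  rw [hx, f.map_formula]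
  have h2 := e.toElementaryEmbedding.map_formula φ (fun i => e.symm (x i))
  rw [Equiv.coe_toElementaryEmbedding] at h2
  rw [← h2]
  have : (⇑e ∘ fun i => e.symm (x i)) = x := by
    funext i
    exact e.toEquiv.apply_symm_apply (x i)
  rw [this]

/-- The range of an elementary embedding as an elementary substructure. -/
noncomputable def rangeES {M N : Type u} [L.Structure M] [L.Structure N] (f : M ↪ₑ[L] N) :
    L.ElementarySubstructure N :=
  ⟨f.toEmbedding.toHom.range, isElementary_range f⟩

theorem mem_rangeES {M N : Type u} [L.Structure M] [L.Structure N] (f : M ↪ₑ[L] N) (x : N) :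
    x ∈ rangeES f ↔ x ∈ Set.range f := by
  simp [rangeES, Hom.range]
  rfl

end Aux

section Aux2

variable {L : FirstOrder.Language.{u, u}}

theorem definableTypeOver_rangeES {M N : Type u} [L.Structure M] [L.Structure N]
    (f : M ↪ₑ[L] N) {n0 : ℕ} (b : Fin n0 → N) (hb : DefTypeVia f b) :
    DefinableTypeOver (rangeES f) b := by
  intro n φ'
  rw [definable_univ_iff_params]
  have hdef := hb n φ'
  rw [definable_univ_iff_params] at hdef
  obtain ⟨k, ψ, c, hc⟩ := hdef
  let e := f.toEmbedding.equivRange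
  refine ⟨k, ψ, fun i => e (c i), fun w => ?_⟩
  have h1 : (fun i => ((w i : N))) = f ∘ (fun i => e.symm (w i)) := by
    funext i
    have h0 : e (e.symm (w i)) = w i := e.toEquiv.apply_symm_apply (w i)
    calc (w i : N) = ((e (e.symm (w i)) : N)) := by rw [h0]
      _ = f (e.symm (w i)) := f.toEmbedding.equivRange_apply _
  have h2 := e.toElementaryEmbedding.map_formula ψ (Sum.elim (fun i => e.symm (w i)) c)
  rw [Equiv.coe_toElementaryEmbedding] at h2
  have h3 : (⇑e ∘ Sum.elim (fun i => e.symm (w i)) c) = Sum.elim w (fun i => e (c i)) := by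
    funext z
    rcases z with z | z
    · simp only [Function.comp_apply, Sum.elim_inl]
      exact e.toEquiv.apply_symm_apply (w z)
    · rfl
  rw [h3] at h2
  rw [mem_setOf_eq, h1]
  exact (hc _).trans h2.symm

end Aux2

section OldAPI

variable {L : FirstOrder.Language.{u, u}}

/-- Universal closure along a relabelling map (old Mathlib API). -/
noncomputable def fIAlls {α β γ : Type*} [Finite γ] (f : α → β ⊕ γ) (φ : L.Formula α) :
    L.Formula β :=
  Formula.iAlls γ (φ.relabel f)

theorem realize_fIAlls {M : Type*} [L.Structure M] {α β γ : Type*} [Finite γ]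
    {f : α → β ⊕ γ} {φ : L.Formula α} {v : β → M} :
    (fIAlls f φ).Realize v ↔ ∀ i : γ → M, φ.Realize (fun a => Sum.elim v i (f a)) := by
  rw [fIAlls, Formula.realize_iAlls]
  simp only [Formula.realize_relabel]
  rfl

/-- Existential closure along a relabelling map (old Mathlib API). -/
noncomputable def fIExs {α β γ : Type*} [Finite γ] (f : α → β ⊕ γ) (φ : L.Formula α) :
    L.Formula β :=
  Formula.iExs γ (φ.relabel f)

theorem realize_fIExs {M : Type*} [L.Structure M] {α β γ : Type*} [Finite γ]
    {f : α → β ⊕ γ} {φ : L.Formula α} {v : β → M} :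
    (fIExs f φ).Realize v ↔ ∃ i : γ → M, φ.Realize (fun a => Sum.elim v i (f a)) := by
  rw [fIExs, Formula.realize_iExs]
  simp only [Formula.realize_relabel]
  rfl

/-- Finite conjunction over a finset (old Mathlib API). -/
noncomputable def bfIInf {α β : Type*} {n : ℕ} (s : Finset β) (f : β → L.BoundedFormula α n) :
    L.BoundedFormula α n :=
  BoundedFormula.iInf (fun b : s => f b)

end OldAPI

section PairSentences

variable (L : FirstOrder.Language.{u, u}) (d m : ℕ)

/-- The language of pairs with `d` extra constants. -/
abbrev Lc : FirstOrder.Language.{u, u} := (LP L)[[Fin d]]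

/-- Inclusion of the pair language into the pair language with constants. -/
abbrev ιc : LP L →ᴸ Lc L d := lhomWithConstants (LP L) (Fin d)

/-- The formula asserting the variable `b` lies in `P`. -/
def PGuard {β : Type*} (b : β) : (Lc L d).Formula β :=
  Relations.formula₁ ((ιc L d).onRelation (Sum.inr PUnit.unit : (LP L).Relations 1)) (Term.var b)

theorem realize_PGuard {A : Type u} [(LP L).Structure A] [(Lc L d).Structure A]
    [(ιc L d).IsExpansionOn A] {β : Type*} (b : β) (v : β → A) :
    (PGuard L d b).Realize v ↔ v b ∈ predSet L A := by
  rw [PGuard, Formula.realize_rel₁]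
  refine (iff_of_eq ((ιc L d).map_onRelation _ _)).trans ?_
  simp only [Term.realize_var]
  exact Iff.rfl

variable {α : Type*}

theorem realize_iInf_formula {β : Type*} {A : Type u} [(Lc L d).Structure A]
    (s : Finset β) (f : β → (Lc L d).Formula α) (v : α → A) :
    Formula.Realize (bfIInf s f) v ↔ ∀ b ∈ s, Formula.Realize (f b) v :=
  BoundedFormula.realize_iInf.trans Subtype.forall

/-- The `L`-formula `φ(x; y)` as an `L_P`-with-constants formula `φ(c; y)`. -/
noncomputable def thetaF (φ : L.Formula (Fin d ⊕ Fin m)) : (Lc L d).Formula (Fin m) :=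
  BoundedFormula.constantsVarsEquiv.symm ((LHom.sumInl : L →ᴸ LP L).onFormula φ)

theorem realize_thetaF {A : Type u} [L.Structure A] [(LP L).Structure A] [(Lc L d).Structure A]
    [(ιc L d).IsExpansionOn A] [(LHom.sumInl : L →ᴸ LP L).IsExpansionOn A]
    (φ : L.Formula (Fin d ⊕ Fin m)) (v : Fin m → A) :
    (thetaF L d m φ).Realize v ↔
      φ.Realize (Sum.elim (fun i => ((LP L).con i : A)) v) := by
  have h1 := BoundedFormula.realize_constantsVarsEquiv (L := LP L) (α := Fin d) (M := A)
      (φ := thetaF L d m φ) (v := v) (xs := default)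
  rw [thetaF, Equiv.apply_symm_apply] at h1
  have h2 : Formula.Realize ((LHom.sumInl : L →ᴸ LP L).onFormula φ)
      (Sum.elim (fun a => ((LP L).con a : A)) v) ↔ (thetaF L d m φ).Realize v := h1
  rw [LHom.realize_onFormula] at h2
  exact h2.symm

/-- The sentence asserting that `ψ(y; c)` is not a `φ`-definition of `tp(a/P)`
for any choice of parameters `c` in `P`. -/
noncomputable def failSent (φ : L.Formula (Fin d ⊕ Fin m)) (k : ℕ)
    (ψ : L.Formula (Fin m ⊕ Fin k)) : (Lc L d).Sentence :=
  fIAlls (Sum.inr : Fin k → Empty ⊕ Fin k)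
    ((bfIInf Finset.univ fun i : Fin k => PGuard L d i).imp
      (fIExs (Sum.elim (fun j : Fin m => Sum.inr j) (fun i : Fin k => Sum.inl i) :
          Fin m ⊕ Fin k → Fin k ⊕ Fin m)
        ((bfIInf Finset.univ fun j : Fin m =>
            PGuard L d (Sum.inl j : Fin m ⊕ Fin k)) ⊓
          (Formula.iff ((thetaF L d m φ).relabel (Sum.inl : Fin m → Fin m ⊕ Fin k))
            ((ιc L d).onFormula ((LHom.sumInl : L →ᴸ LP L).onFormula ψ))).not)))

theorem realize_failSent {A : Type u} [L.Structure A] [(LP L).Structure A]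
    [(Lc L d).Structure A]
    [(ιc L d).IsExpansionOn A] [(LHom.sumInl : L →ᴸ LP L).IsExpansionOn A]
    (φ : L.Formula (Fin d ⊕ Fin m)) (k : ℕ) (ψ : L.Formula (Fin m ⊕ Fin k)) :
    A ⊨ failSent L d m φ k ψ ↔
      ∀ c : Fin k → A, (∀ i, c i ∈ predSet L A) →
        ∃ b : Fin m → A, (∀ j, b j ∈ predSet L A) ∧
          ¬ (φ.Realize (Sum.elim (fun i => ((LP L).con i : A)) b) ↔
             ψ.Realize (Sum.elim b c)) := by
  rw [Sentence.Realize, failSent, realize_fIAlls]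
  refine forall_congr' fun c => ?_
  have hc : (fun a => Sum.elim (default : Empty → A) c (Sum.inr a)) = c := rfl
  rw [hc, Formula.realize_imp, realize_iInf_formula]
  have hg : (∀ i ∈ Finset.univ, (PGuard L d i).Realize c) ↔ (∀ i, c i ∈ predSet L A) := by
    simp only [Finset.mem_univ, true_implies, realize_PGuard]
  rw [hg, realize_fIExs]
  refine imp_congr_right fun _ => exists_congr fun b => ?_
  have hb : (fun a => Sum.elim c b
      ((Sum.elim (fun j : Fin m => Sum.inr j) (fun i : Fin k => Sum.inl i) :
        Fin m ⊕ Fin k → Fin k ⊕ Fin m) a)) = Sum.elim b c := by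
    funext z; rcases z with z | z <;> rfl
  rw [hb, Formula.realize_inf, realize_iInf_formula]
  have hg2 : (∀ j ∈ Finset.univ,
      (PGuard L d (Sum.inl j : Fin m ⊕ Fin k)).Realize (Sum.elim b c)) ↔
      (∀ j, b j ∈ predSet L A) := by
    simp only [Finset.mem_univ, true_implies, realize_PGuard, Sum.elim_inl]
  rw [hg2, Formula.realize_not, Formula.realize_iff, Formula.realize_relabel,
    Sum.elim_comp_inl, realize_thetaF, LHom.realize_onFormula, LHom.realize_onFormula]

end PairSentences

/-- Criterion for uniform definability of types.  Let `T` be a complete theory such that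
(i) the class of stably embedded pairs of models of `T` is axiomatizable in the language of
pairs `L_P`, and (ii) every definable type over a model `M` of `T` is realized in some stably
embedded pair `(N', M)`.  Then `T` has uniform definability of types: every partitioned formula
`φ(x; y)` admits a single formula `ψ(y, z)` such that for every model `M` of `T` and every
definable type `p` over `M` (represented by a realization `a` in an elementary extension whose
type over `M` is definable), some instance `ψ(y, c)` with `c ∈ M` is the `φ`-definition of `p`. -/
theorem uniform_definability_of_pairs (T : L.Theory) (hT : T.IsComplete)
    (hi : ∃ Tp : (LP L).Theory, ∀ (A : Type u) (_ : (LP L).Structure A),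
      A ⊨ Tp ↔ IsSEPairModel L T A)
    (hii : ∀ (M N : Theory.ModelType.{u, u, u} T) (h : (M : Type u) ↪ₑ[L] (N : Type u))
      (d : ℕ) (a : Fin d → N), DefTypeVia h a →
      ∃ (N' : Theory.ModelType.{u, u, u} T) (h' : (M : Type u) ↪ₑ[L] (N' : Type u))
        (a' : Fin d → N'),
        (∀ (n : ℕ) (b : Fin n → N'), DefTypeVia h' b) ∧
        (∀ (n : ℕ) (ψ : L.Formula (Fin d ⊕ Fin n)) (c : Fin n → M),
          ψ.Realize (Sum.elim a' (h' ∘ c)) ↔ ψ.Realize (Sum.elim a (h ∘ c)))) :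
    ∀ (d m : ℕ) (φ : L.Formula (Fin d ⊕ Fin m)),
      ∃ (k : ℕ) (ψ : L.Formula (Fin m ⊕ Fin k)),
        ∀ (M N : Theory.ModelType.{u, u, u} T) (h : (M : Type u) ↪ₑ[L] (N : Type u))
          (a : Fin d → N), DefTypeVia h a →
          ∃ c : Fin k → M, ∀ b : Fin m → M,
            φ.Realize (Sum.elim a (h ∘ b)) ↔ ψ.Realize (Sum.elim b c) := by
  classical
  intro d m φ
  set σ₂ : L.Sentence :=
    fIExs (Sum.inr : Fin 2 → Empty ⊕ Fin 2)
      (Term.equal (Term.var (0 : Fin 2)) (Term.var (1 : Fin 2))).not with hσ₂def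
  have hσ₂ : ∀ (B : Type u) [L.Structure B], B ⊨ σ₂ ↔ ∃ x y : B, x ≠ y := by
    intro B _
    rw [hσ₂def, Sentence.Realize, realize_fIExs]
    constructor
    · rintro ⟨i, hi⟩
      rw [Formula.realize_not, Formula.realize_equal] at hi
      simp only [Term.realize_var] at hi
      exact ⟨i 0, i 1, hi⟩
    · rintro ⟨x, y, hxy⟩
      refine ⟨![x, y], ?_⟩
      rw [Formula.realize_not, Formula.realize_equal]
      simpa using hxy
  rcases hT.2 σ₂ with hbig | hsmall
  swap
  · -- every model of `T` has exactly one element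
    refine ⟨d, φ.relabel Sum.swap, ?_⟩
    intro M N h a _
    obtain ⟨c0⟩ := (inferInstance : Nonempty (M : Type u))
    have hsub : ∀ x y : (N : Type u), x = y := by
      have hns := hsmall.realize_sentence (N : Type u)
      rw [Sentence.realize_not, hσ₂ (N : Type u)] at hns
      push_neg at hns
      exact hns
    refine ⟨fun _ => c0, fun b => ?_⟩
    have h1 : Sum.elim a (h ∘ b) = ⇑h ∘ (Sum.elim (fun _ => c0) b) := by
      funext z; exact hsub _ _
    rw [h1, h.map_formula, Formula.realize_relabel]
    have h2 : (Sum.elim b (fun _ : Fin d => c0)) ∘ Sum.swap = Sum.elim (fun _ => c0) b := by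
      funext z; rcases z with z | z <;> rfl
    rw [h2]
  · -- every model of `T` has two distinct elements
    obtain ⟨Tp, hTp⟩ := hi
    set bigT : (Lc L d).Theory :=
      (ιc L d).onTheory Tp ∪
        Set.range (fun j : (k : ℕ) × L.Formula (Fin m ⊕ Fin k) =>
          failSent L d m φ j.1 j.2) with hbigT
    have hunsat : ¬ bigT.IsSatisfiable := by
      rintro ⟨A⟩
      letI instLP : (LP L).Structure A := (ιc L d).reduct A
      letI instL : L.Structure A := (LHom.sumInl : L →ᴸ LP L).reduct A
      haveI i1 : (ιc L d).IsExpansionOn A := LHom.isExpansionOn_reduct _ _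
      haveI i2 : (LHom.sumInl : L →ᴸ LP L).IsExpansionOn A := LHom.isExpansionOn_reduct _ _
      have hA : A ⊨ bigT := A.is_model
      have hTpA : A ⊨ Tp := (LHom.onTheory_model (ιc L d) Tp).1 (hA.mono Set.subset_union_left)
      have hSE : IsSEPairModel L T A := (hTp A instLP).1 hTpA
      obtain ⟨-, S, hScar, hdefall⟩ := hSE
      set aT : Fin d → A := fun i => ((LP L).con i : A) with haT
      have hdef := hdefall d aT m φ
      rw [definable_univ_iff_params] at hdef
      obtain ⟨k, ψ, cS, hc⟩ := hdef
      have hmem : failSent L d m φ k ψ ∈ bigT := by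
        rw [hbigT]
        exact Set.mem_union_right _ ⟨⟨k, ψ⟩, rfl⟩
      have hfs : A ⊨ failSent L d m φ k ψ := Theory.realize_sentence_of_mem bigT hmem
      rw [realize_failSent] at hfs
      obtain ⟨b, hbP, hbne⟩ := hfs (fun i => ((cS i : A)))
        (fun i => by rw [← hScar]; exact (cS i).2)
      set vS : Fin m → S := fun j => ⟨b j, by
        rw [← SetLike.mem_coe, hScar]; exact hbP j⟩ with hvS
      have hsub := S.subtype.map_formula ψ (Sum.elim vS cS)
      rw [ElementarySubstructure.coe_subtype] at hsub
      have hcomp : ((↑) ∘ (Sum.elim vS cS) : _ → A)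
          = Sum.elim b (fun i => ((cS i : A))) := by
        funext z; rcases z with z | z <;> rfl
      rw [hcomp] at hsub
      exact hbne ((hc vS).trans hsub.symm)
    rw [Theory.isSatisfiable_iff_isFinitelySatisfiable, Theory.IsFinitelySatisfiable] at hunsat
    push_neg at hunsat
    obtain ⟨T0, hT0sub, hT0unsat⟩ := hunsat
    set g : (Lc L d).Sentence → Option ((k : ℕ) × L.Formula (Fin m ⊕ Fin k)) := fun s =>
      if hs : ∃ j : (k : ℕ) × L.Formula (Fin m ⊕ Fin k),
        s = failSent L d m φ j.1 j.2 then some hs.choose else none with hg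
    set l : List ((k : ℕ) × L.Formula (Fin m ⊕ Fin k)) := T0.toList.filterMap g with hl
    obtain ⟨K, Ψ, hΨ⟩ := combine_list (L := L) l
    refine ⟨K, Ψ, ?_⟩
    intro M N h a hdta
    obtain ⟨N', h', a', hN'def, htrans⟩ := hii M N h d a hdta
    letI pstr : pLang.{u}.Structure N' := pStructureOfSet (Set.range h')
    letI lpstr : (LP L).Structure N' := Language.sumStructure L pLang N'
    letI cstr : (constantsOn (Fin d)).Structure N' := constantsOn.structure a'
    letI lcstr : (Lc L d).Structure N' := Language.sumStructure (LP L) (constantsOn (Fin d)) N'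
    haveI : (ιc L d).IsExpansionOn N' := ⟨fun _ _ => rfl, fun _ _ => rfl⟩
    have hpred : predSet L N' = Set.range ⇑h' := by
      ext x; exact mem_predSet_pStructureOfSet (Set.range ⇑h') x
    have hSE : IsSEPairModel L T N' := by
      refine ⟨N'.is_model, rangeES h', ?_, ?_⟩
      · ext x
        rw [SetLike.mem_coe]
        exact (mem_rangeES h' x).trans (by rw [hpred])
      · intro n b
        exact definableTypeOver_rangeES h' b (hN'def n b)
    have hTpN' : N' ⊨ Tp := (hTp N' lpstr).2 hSE
    haveI hmodC : N' ⊨ (ιc L d).onTheory Tp := (LHom.onTheory_model (ιc L d) Tp).2 hTpN'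
    have hnT0 : ¬ ((N' : Type u) ⊨ (↑T0 : (Lc L d).Theory)) := by
      intro hm
      haveI := hm
      exact hT0unsat (Theory.Model.isSatisfiable (T := (↑T0 : (Lc L d).Theory)) N')
    have hex : ∃ j ∈ l, ¬ (N' : Type u) ⊨ failSent L d m φ j.1 j.2 := by
      by_contra hcon
      push_neg at hcon
      apply hnT0
      rw [Theory.model_iff]
      intro s hs
      rcases hT0sub hs with hsTp | hsf
      · exact Theory.realize_sentence_of_mem ((ιc L d).onTheory Tp) hsTp
      · obtain ⟨j0, hj0⟩ := Set.mem_range.1 hsf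
        have hex' : ∃ j : (k : ℕ) × L.Formula (Fin m ⊕ Fin k),
            s = failSent L d m φ j.1 j.2 := ⟨j0, hj0.symm⟩
        have hgs : g s = some hex'.choose := dif_pos hex'
        have hmem : hex'.choose ∈ l := List.mem_filterMap.2 ⟨s, Finset.mem_toList.2 hs, hgs⟩
        have hr := hcon _ hmem
        rw [hex'.choose_spec]
        exact hr
    obtain ⟨j, hjl, hjf⟩ := hex
    rw [realize_failSent] at hjf
    push_neg at hjf
    obtain ⟨cN, hcP, hiff⟩ := hjf
    have hc0 : ∀ i, ∃ x : (M : Type u), h' x = cN i := by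
      intro i; have hm := hcP i; rw [hpred] at hm; exact hm
    choose c0 hc0' using hc0
    have h2 : ∃ x y : (M : Type u), x ≠ y := by
      have hb := hbig.realize_sentence (M : Type u)
      rwa [hσ₂ (M : Type u)] at hb
    obtain ⟨x, y, hxy⟩ := h2
    refine hΨ (M : Type u) x y hxy (fun v => φ.Realize (Sum.elim a (⇑h ∘ v))) ⟨j, hjl, c0, ?_⟩
    intro v
    have happ := hiff (⇑h' ∘ v) (fun j' => by rw [hpred]; exact ⟨v j', rfl⟩)
    have hconeq : (fun i => ((LP L).con i : N')) = a' := rfl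
    rw [hconeq] at happ
    have hLHS := (htrans m φ v).symm.trans happ
    have hcN : Sum.elim (⇑h' ∘ v) cN = ⇑h' ∘ (Sum.elim v c0) := by
      funext z; rcases z with z | z
      · rfl
      · simp only [Sum.elim_inr, Function.comp_apply]
        exact (hc0' z).symm
    rw [hcN, h'.map_formula] at hLHS
    exact hLHS

end UDCriterion
end

section
/- Let $T$ be a complete theory with uniform definability of types, and define for a model $M$ the map $\tau$ sending each global $M$-definable type $p$ in variables $x$ to the tuple of canonical parameters $(c(p,\varphi))_\varphi$ of its uniform $\varphi$-definitions (in $T^{\mathrm{eq}}$, with canonical parameters made unique). Then $\tau$ is injective and its image is the set of parameter tuples $(c_\varphi)_\varphi$ satisfying, for each $\varphi(x;y)$, the condition $(\forall y)(\exists x)(\varphi(x,y) \leftrightarrow d\varphi(y,c_\varphi))$, assuming the scheme $\varphi \mapsto d\varphi$ commutes with conjunction and negation. Consequently the space of definable types is in bijection with a $*$-definable set. -/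
open FirstOrder FirstOrder.Language Set

universe u

namespace ProDef

variable {L : FirstOrder.Language.{u, u}}

/-- The type `tp(a/M)` (for `a` a tuple in an elementary extension `N` of `M`) is
definable over `M`. -/
def DefTypeVia {M N : Type u} [L.Structure M] [L.Structure N] (h : M ↪ₑ[L] N) {α : Type*}
    (a : α → N) : Prop :=
  ∀ (n : ℕ) (φ : L.Formula (α ⊕ Fin n)),
    Set.Definable (Set.univ : Set M) L {c : Fin n → M | φ.Realize (Sum.elim a (h ∘ c))}

variable (L)

/-- The index set `Φ` of partitioned formulas `φ(x; y)` with `x` of length `d` and `y` a finite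
tuple of variables. -/
def Idx (d : ℕ) : Type u := (m : ℕ) × L.Formula (Fin d ⊕ Fin m)

variable {d : ℕ}

/-- The negation of a partitioned formula. -/
def negIdx (i : Idx L d) : Idx L d := ⟨i.1, i.2.not⟩

/-- The conjunction of two partitioned formulas (in disjoint `y`-variables). -/
def conjIdx (i j : Idx L d) : Idx L d :=
  ⟨i.1 + j.1, (i.2.relabel (Sum.map id (Fin.castAdd j.1))) ⊓
    (j.2.relabel (Sum.map id (Fin.natAdd i.1)))⟩

variable {L}

/-- `c` is the family of canonical parameters of the definitions of the type `tp(a/M)` with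
respect to the uniform definition scheme `dφ`: for each partitioned formula `i = φ(x;y)`,
`dφ i (y, c i)` is the `φ`-definition of `tp(a/M)`. -/
def IsCodes {k : Idx L d → ℕ} (dφ : ∀ i : Idx L d, L.Formula (Fin i.1 ⊕ Fin (k i)))
    {M N : Type u} [L.Structure M] [L.Structure N] (h : M ↪ₑ[L] N)
    (a : Fin d → N) (c : ∀ i : Idx L d, Fin (k i) → M) : Prop :=
  ∀ (i : Idx L d) (b : Fin i.1 → M),
    i.2.Realize (Sum.elim a (h ∘ b)) ↔ (dφ i).Realize (Sum.elim b (c i))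

/-- The family of parameters `c` is coherent with respect to Boolean combinations: the scheme
`d` factors through negations and conjunctions. -/
def Coherent {k : Idx L d → ℕ} (dφ : ∀ i : Idx L d, L.Formula (Fin i.1 ⊕ Fin (k i)))
    {M : Type u} [L.Structure M] (c : ∀ i : Idx L d, Fin (k i) → M) : Prop :=
  (∀ (i : Idx L d) (b : Fin i.1 → M),
    (dφ (negIdx L i)).Realize (Sum.elim b (c (negIdx L i))) ↔
      ¬ (dφ i).Realize (Sum.elim b (c i))) ∧
  (∀ (i j : Idx L d) (b : Fin (i.1 + j.1) → M),
    (dφ (conjIdx L i j)).Realize (Sum.elim b (c (conjIdx L i j))) ↔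
      ((dφ i).Realize (Sum.elim (b ∘ Fin.castAdd j.1) (c i)) ∧
        (dφ j).Realize (Sum.elim (b ∘ Fin.natAdd i.1) (c j))))

/-- The family `c` satisfies the conditions `Θ`: for each partitioned formula `φ(x;y)`,
`(∀ y)(∃ x)(φ(x,y) ↔ dφ(y, c_φ))`. -/
def SatTheta {k : Idx L d → ℕ} (dφ : ∀ i : Idx L d, L.Formula (Fin i.1 ⊕ Fin (k i)))
    {M : Type u} [L.Structure M] (c : ∀ i : Idx L d, Fin (k i) → M) : Prop :=
  ∀ (i : Idx L d) (b : Fin i.1 → M), ∃ x : Fin d → M,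
    (i.2.Realize (Sum.elim x b) ↔ (dφ i).Realize (Sum.elim b (c i)))


lemma exists_realize_of_list {k : Idx L d → ℕ}
    (dφ : ∀ i : Idx L d, L.Formula (Fin i.1 ⊕ Fin (k i)))
    {M : Type u} [L.Structure M]
    {c : ∀ i : Idx L d, Fin (k i) → M} (hcoh : Coherent dφ c) (hsat : SatTheta dφ c)
    (l : List ((i : Idx L d) × (Fin i.1 → M)))
    (hl : ∀ p ∈ l, (dφ p.1).Realize (Sum.elim p.2 (c p.1))) :
    ∃ x : Fin d → M, ∀ p ∈ l, p.1.2.Realize (Sum.elim x p.2) := by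
  suffices h : ∃ q : (i : Idx L d) × (Fin i.1 → M),
      (dφ q.1).Realize (Sum.elim q.2 (c q.1)) ∧
      ∀ x : Fin d → M, q.1.2.Realize (Sum.elim x q.2) →
        ∀ p ∈ l, p.1.2.Realize (Sum.elim x p.2) by
    obtain ⟨q, hq1, hq2⟩ := h
    obtain ⟨x, hx⟩ := hsat q.1 q.2
    exact ⟨x, hq2 x (hx.2 hq1)⟩
  induction l with
  | nil =>
    refine ⟨⟨⟨0, ⊤⟩, finZeroElim⟩, ?_, fun x _ p hp => absurd hp List.not_mem_nil⟩
    obtain ⟨x, hx⟩ := hsat ⟨0, ⊤⟩ finZeroElim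
    exact hx.1 (by simp)
  | cons p l ih =>
    obtain ⟨q, hq1, hq2⟩ := ih (fun r hr => hl r (List.mem_cons_of_mem _ hr))
    set B : Fin (p.1.1 + q.1.1) → M := Fin.addCases (motive := fun _ => M) p.2 q.2 with hB
    have e1 : B ∘ Fin.castAdd q.1.1 = p.2 := by funext j; simp [hB]
    have e2 : B ∘ Fin.natAdd p.1.1 = q.2 := by funext j; simp [hB]
    refine ⟨⟨conjIdx L p.1 q.1, B⟩, ?_, ?_⟩
    · refine (hcoh.2 p.1 q.1 B).2 ⟨?_, ?_⟩
      · rw [e1]; exact hl p List.mem_cons_self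
      · rw [e2]; exact hq1
    · intro x hx p' hp'
      have e3 : Sum.elim x B ∘ Sum.map id (Fin.castAdd q.1.1) = Sum.elim x p.2 := by
        funext s
        cases s with
        | inl j => rfl
        | inr j => simpa using congrFun e1 j
      have e4 : Sum.elim x B ∘ Sum.map id (Fin.natAdd p.1.1) = Sum.elim x q.2 := by
        funext s
        cases s with
        | inl j => rfl
        | inr j => simpa using congrFun e2 j
      simp only [conjIdx, Formula.realize_inf, Formula.realize_relabel, e3, e4] at hx
      rcases List.mem_cons.1 hp' with rfl | hmem
      · exact hx.1
      · exact hq2 x hx.2 p' hmem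

lemma exists_model_of_coherent (T : L.Theory)
    (M : Theory.ModelType.{u, u, u} T)
    {k : Idx L d → ℕ} (dφ : ∀ i : Idx L d, L.Formula (Fin i.1 ⊕ Fin (k i)))
    {c : ∀ i : Idx L d, Fin (k i) → M} (hcoh : Coherent dφ c) (hsat : SatTheta dφ c) :
    ∃ (N : Theory.ModelType.{u, u, u} T) (h : (M : Type u) ↪ₑ[L] (N : Type u))
      (a : Fin d → N), DefTypeVia h a ∧ IsCodes dφ h a c := by
  classical
  let χ : ((i : Idx L d) × (Fin i.1 → M)) → (L[[(M : Type u) ⊕ Fin d]]).Sentence := fun p =>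
    Formula.equivSentence
      (p.1.2.relabel (Sum.elim (fun j => Sum.inr j) (fun m => Sum.inl (p.2 m))))
  let D : (L[[(M : Type u) ⊕ Fin d]]).Theory :=
    (L.lhomWithConstantsMap (Sum.inl : _ → (M : Type u) ⊕ Fin d)).onTheory
      (L.elementaryDiagram M)
  let S : Set ((i : Idx L d) × (Fin i.1 → M)) :=
    {p | (dφ p.1).Realize (Sum.elim p.2 (c p.1))}
  have hsatis : (D ∪ χ '' S).IsSatisfiable := by
    rw [Theory.isSatisfiable_iff_isFinitelySatisfiable]
    intro T0 hT0
    have hc : ∀ σ : (L[[(M : Type u) ⊕ Fin d]]).Sentence,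
        ∃ p : ((i : Idx L d) × (Fin i.1 → M)),
          ((σ ∈ (T0 : Set _) ∧ σ ∉ D) → p ∈ S ∧ σ = χ p) := by
      intro σ
      by_cases hσ : σ ∈ (T0 : Set _) ∧ σ ∉ D
      · rcases hT0 hσ.1 with h | ⟨p, hp, rfl⟩
        · exact absurd h hσ.2
        · exact ⟨p, fun _ => ⟨hp, rfl⟩⟩
      · exact ⟨⟨⟨0, ⊤⟩, finZeroElim⟩, fun h => absurd h hσ⟩
    choose f hf using hc
    let l : List ((i : Idx L d) × (Fin i.1 → M)) := ((T0.filter (· ∉ D)).toList).map f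
    have hl : ∀ p ∈ l, (dφ p.1).Realize (Sum.elim p.2 (c p.1)) := by
      intro p hp
      rcases List.mem_map.1 hp with ⟨σ, hσ, rfl⟩
      rw [Finset.mem_toList, Finset.mem_filter] at hσ
      exact (hf σ ⟨hσ.1, hσ.2⟩).1
    obtain ⟨x, hx⟩ := exists_realize_of_list dφ hcoh hsat l hl
    letI : (constantsOn ((M : Type u) ⊕ Fin d)).Structure M :=
      constantsOn.structure (Sum.elim id x)
    haveI : (LHom.constantsOnMap (Sum.inl : _ → (M : Type u) ⊕ Fin d)).IsExpansionOn
        (M : Type u) := constantsOnMap_isExpansionOn rfl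
    haveI : (L.lhomWithConstantsMap (Sum.inl : _ → (M : Type u) ⊕ Fin d)).IsExpansionOn
        (M : Type u) := inferInstanceAs
      ((LHom.sumMap (LHom.id L) (LHom.constantsOnMap Sum.inl)).IsExpansionOn (M : Type u))
    haveI hM : (M : Type u) ⊨ (T0 : (L[[(M : Type u) ⊕ Fin d]]).Theory) := by
      rw [Theory.model_iff]
      intro σ hσ
      by_cases hD : σ ∈ D
      · obtain ⟨σ₀, hσ₀, rfl⟩ := hD
        rw [LHom.realize_onSentence]
        exact mem_completeTheory.1 hσ₀
      · obtain ⟨hpS, hχ⟩ := hf σ ⟨hσ, hD⟩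
        rw [hχ]
        rw [show χ (f σ) = Formula.equivSentence
          ((f σ).1.2.relabel (Sum.elim (fun j => Sum.inr j) (fun m => Sum.inl ((f σ).2 m))))
          from rfl, Formula.realize_equivSentence, Formula.realize_relabel]
        have e : ((fun s => ((L.con s : (L[[(M : Type u) ⊕ Fin d]]).Constants) : (M : Type u))) ∘
            (Sum.elim (fun j => Sum.inr j) (fun m => Sum.inl ((f σ).2 m)) :
              Fin d ⊕ Fin (f σ).1.1 → ((M : Type u) ⊕ Fin d))) = Sum.elim x (f σ).2 := by
          funext s
          cases s with
          | inl j => rfl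
          | inr m => rfl
        rw [e]
        refine hx (f σ) ?_
        rw [List.mem_map]
        refine ⟨σ, ?_, rfl⟩
        rw [Finset.mem_toList, Finset.mem_filter]
        exact ⟨hσ, hD⟩
    exact Theory.Model.isSatisfiable (M : Type u)
  obtain ⟨N'⟩ := hsatis
  letI SL : L.Structure N' := (L.lhomWithConstants ((M : Type u) ⊕ Fin d)).reduct N'
  letI SLM : (L[[(M : Type u)]]).Structure N' :=
    (L.lhomWithConstantsMap (Sum.inl : _ → (M : Type u) ⊕ Fin d)).reduct N'
  haveI hred1 : (L.lhomWithConstants ((M : Type u) ⊕ Fin d)).IsExpansionOn (N' : Type u) :=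
    LHom.isExpansionOn_reduct _ _
  haveI hred2 : (L.lhomWithConstantsMap (Sum.inl : _ → (M : Type u) ⊕ Fin d)).IsExpansionOn
      (N' : Type u) := LHom.isExpansionOn_reduct _ _
  haveI hexp : (lhomWithConstants L (M : Type u)).IsExpansionOn (N' : Type u) :=
    ⟨fun f xv => rfl, fun R xv => rfl⟩
  haveI hdiag : (N' : Type u) ⊨ L.elementaryDiagram M := by
    have hD : (N' : Type u) ⊨ D := N'.is_model.mono Set.subset_union_left
    rwa [LHom.onTheory_model] at hD
  let h : (M : Type u) ↪ₑ[L] (N' : Type u) :=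
    ElementaryEmbedding.ofModelsElementaryDiagram L M N'
  haveI hNT : (N' : Type u) ⊨ T := (h.theory_model_iff T).1 inferInstance
  let N : Theory.ModelType.{u, u, u} T := Theory.ModelType.of T (N' : Type u)
  let a : Fin d → (N' : Type u) := fun j =>
    ((L.con (Sum.inr j) : (L[[(M : Type u) ⊕ Fin d]]).Constants) : (N' : Type u))
  have hreal : ∀ p : ((i : Idx L d) × (Fin i.1 → M)), p ∈ S →
      p.1.2.Realize (Sum.elim a (h ∘ p.2)) := by
    intro p hp
    have hmem : χ p ∈ D ∪ χ '' S := Or.inr ⟨p, hp, rfl⟩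
    have hre : (N' : Type u) ⊨ χ p := (D ∪ χ '' S).realize_sentence_of_mem hmem
    rw [show χ p = Formula.equivSentence
        (p.1.2.relabel (Sum.elim (fun j => Sum.inr j) (fun m => Sum.inl (p.2 m)))) from rfl,
      Formula.realize_equivSentence, Formula.realize_relabel] at hre
    have e : ((fun s => ((L.con s : (L[[(M : Type u) ⊕ Fin d]]).Constants) : (N' : Type u))) ∘
        (Sum.elim (fun j => Sum.inr j) (fun m => Sum.inl (p.2 m)) :
          Fin d ⊕ Fin p.1.1 → ((M : Type u) ⊕ Fin d))) = Sum.elim a (h ∘ p.2) := by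
      funext s
      cases s with
      | inl j => rfl
      | inr m => rfl
    rwa [e] at hre
  have hcodes : IsCodes dφ h a c := by
    intro i b
    by_cases hd : (dφ i).Realize (Sum.elim b (c i))
    · exact iff_of_true (hreal ⟨i, b⟩ hd) hd
    · refine iff_of_false ?_ hd
      have hneg : (⟨negIdx L i, b⟩ : (i : Idx L d) × (Fin i.1 → M)) ∈ S :=
        (hcoh.1 i b).2 hd
      have := hreal ⟨negIdx L i, b⟩ hneg
      rw [show (negIdx L i).2 = i.2.not from rfl] at this
      exact Formula.realize_not.1 this
  refine ⟨N, h, a, ?_, hcodes⟩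
  intro n φ
  have hset : {e : Fin n → M | φ.Realize (Sum.elim a (h ∘ e))} =
      {e : Fin n → M | (dφ ⟨n, φ⟩).Realize (Sum.elim e (c ⟨n, φ⟩))} :=
    Set.ext fun e => hcodes ⟨n, φ⟩ e
  have hdefset : Set.Definable (Set.univ : Set (M : Type u)) L
      {e : Fin n → (M : Type u) | (dφ ⟨n, φ⟩).Realize (Sum.elim e (c ⟨n, φ⟩))} := by
    rw [Set.definable_iff_exists_formula_sum]
    refine ⟨(dφ ⟨n, φ⟩).relabel (Sum.elim (fun j => Sum.inr j)
      (fun j => Sum.inl ⟨c ⟨n, φ⟩ j, Set.mem_univ _⟩)), ?_⟩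
    ext e
    rw [Set.mem_setOf_eq, Set.mem_setOf_eq, Formula.realize_relabel]
    have heq : (Sum.elim (fun y : ↥(Set.univ : Set (M : Type u)) => (y : (M : Type u))) e) ∘
        (Sum.elim (fun j : Fin n => Sum.inr j)
          (fun j => Sum.inl ⟨c ⟨n, φ⟩ j, Set.mem_univ _⟩)) = Sum.elim e (c ⟨n, φ⟩) := by
      funext s
      cases s <;> rfl
    rw [heq]
  exact hset ▸ hdefset

/-- Suppose `T` has uniform definability of types, witnessed by the scheme `dφ` (with uniqueness
of the canonical parameters).  Then the map `τ` sending a definable type to the family of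
canonical parameters of its definitions is injective, and its image is exactly the set of
coherent parameter families satisfying the conditions `Θ`; hence the space of definable types
(in variables `x` of length `d`) over a model `M` of `T` is in bijection with a `*`-definable
set. -/
theorem tau_injective_and_image (T : L.Theory) (hT : T.IsComplete) (d : ℕ)
    (k : Idx L d → ℕ) (dφ : ∀ i : Idx L d, L.Formula (Fin i.1 ⊕ Fin (k i)))
    -- `dφ` is a uniform definition scheme for definable types:
    (hUD : ∀ (M N : Theory.ModelType.{u, u, u} T) (h : (M : Type u) ↪ₑ[L] (N : Type u))
      (a : Fin d → N), DefTypeVia h a → ∃ c, IsCodes dφ h a c)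
    -- canonical parameters are unique:
    (huniq : ∀ (M : Theory.ModelType.{u, u, u} T) (i : Idx L d) (c c' : Fin (k i) → M),
      (∀ b : Fin i.1 → M, (dφ i).Realize (Sum.elim b c) ↔ (dφ i).Realize (Sum.elim b c')) →
        c = c')
    (M : Theory.ModelType.{u, u, u} T) :
    -- (1) `τ` is injective: types with the same codes are equal
    (∀ (N N' : Theory.ModelType.{u, u, u} T) (h : (M : Type u) ↪ₑ[L] (N : Type u))
      (h' : (M : Type u) ↪ₑ[L] (N' : Type u)) (a : Fin d → N) (a' : Fin d → N')
      (c : ∀ i : Idx L d, Fin (k i) → M),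
      DefTypeVia h a → DefTypeVia h' a' → IsCodes dφ h a c → IsCodes dφ h' a' c →
      ∀ (n : ℕ) (ψ : L.Formula (Fin d ⊕ Fin n)) (e : Fin n → M),
        ψ.Realize (Sum.elim a (h ∘ e)) ↔ ψ.Realize (Sum.elim a' (h' ∘ e))) ∧
    -- (2) the image of `τ` is the `*`-definable set cut out by `Θ` (within coherent families)
    (∀ c : ∀ i : Idx L d, Fin (k i) → M,
      (Coherent dφ c ∧ SatTheta dφ c) ↔
        ∃ (N : Theory.ModelType.{u, u, u} T) (h : (M : Type u) ↪ₑ[L] (N : Type u))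
          (a : Fin d → N), DefTypeVia h a ∧ IsCodes dφ h a c) := by
  classical
  refine ⟨?_, ?_⟩
  · intro N N' h h' a a' c hda hda' hc hc' n ψ e
    exact (hc ⟨n, ψ⟩ e).trans (hc' ⟨n, ψ⟩ e).symm
  · intro c
    constructor
    · rintro ⟨hcoh, hsat⟩
      exact exists_model_of_coherent T M dφ hcoh hsat
    · rintro ⟨N, h, a, hdef, hcodes⟩
      refine ⟨⟨?_, ?_⟩, ?_⟩
      · intro i b
        have h1 := hcodes (negIdx L i) b
        have h2 := hcodes i b
        rw [← h1, ← h2]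
        exact Formula.realize_not
      · intro i j b
        have h1 := hcodes (conjIdx L i j) b
        have h2 := hcodes i (b ∘ Fin.castAdd j.1)
        have h3 := hcodes j (b ∘ Fin.natAdd i.1)
        rw [← h1, ← h2, ← h3]
        have e1 : Sum.elim a (⇑h ∘ b) ∘ Sum.map id (Fin.castAdd j.1) =
            Sum.elim a (⇑h ∘ (b ∘ Fin.castAdd j.1)) := by funext s; cases s <;> rfl
        have e2 : Sum.elim a (⇑h ∘ b) ∘ Sum.map id (Fin.natAdd i.1) =
            Sum.elim a (⇑h ∘ (b ∘ Fin.natAdd i.1)) := by funext s; cases s <;> rfl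
        show ((i.2.relabel (Sum.map id (Fin.castAdd j.1))) ⊓
          (j.2.relabel (Sum.map id (Fin.natAdd i.1)))).Realize (Sum.elim a (⇑h ∘ b)) ↔ _
        rw [Formula.realize_inf,
          Formula.realize_relabel, Formula.realize_relabel, e1, e2]
      · intro i b
        by_cases hd : (dφ i).Realize (Sum.elim b (c i))
        · have hab : i.2.Realize (Sum.elim a (⇑h ∘ b)) := (hcodes i b).2 hd
          have h1 : (Formula.iExs (Fin d) (i.2.relabel Sum.swap)).Realize (⇑h ∘ b) := by
            rw [Formula.realize_iExs]
            refine ⟨a, ?_⟩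
            have heq : Sum.elim (⇑h ∘ b) a ∘ Sum.swap = Sum.elim a (⇑h ∘ b) := by
              funext s; cases s <;> rfl
            rw [Formula.realize_relabel, heq]; exact hab
          have h2 := (h.map_formula (Formula.iExs (Fin d) (i.2.relabel Sum.swap)) b).1 h1
          rw [Formula.realize_iExs] at h2
          obtain ⟨x, hx⟩ := h2
          have heq : Sum.elim b x ∘ Sum.swap = Sum.elim x b := by
            funext s; cases s <;> rfl
          rw [Formula.realize_relabel, heq] at hx
          exact ⟨x, iff_of_true hx hd⟩
        · have hab : ¬ i.2.Realize (Sum.elim a (⇑h ∘ b)) := fun hh => hd ((hcodes i b).1 hh)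
          have h1 : (Formula.iExs (Fin d) (i.2.not.relabel Sum.swap)).Realize (⇑h ∘ b) := by
            rw [Formula.realize_iExs]
            refine ⟨a, ?_⟩
            have heq : Sum.elim (⇑h ∘ b) a ∘ Sum.swap = Sum.elim a (⇑h ∘ b) := by
              funext s; cases s <;> rfl
            rw [Formula.realize_relabel, heq]; exact Formula.realize_not.2 hab
          have h2 := (h.map_formula (Formula.iExs (Fin d) (i.2.not.relabel Sum.swap)) b).1 h1
          rw [Formula.realize_iExs] at h2
          obtain ⟨x, hx⟩ := h2
          have heq : Sum.elim b x ∘ Sum.swap = Sum.elim x b := by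
            funext s; cases s <;> rfl
          rw [Formula.realize_relabel, heq] at hx
          exact ⟨x, iff_of_false (Formula.realize_not.1 hx) hd⟩


end ProDef
end
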